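/- Let G be a centerless group with the finitely generated fixed subgroup property of automorphisms, whose derived subgroup [G, G] is finitely generated, and such that for every automorphism ψ of G and every finitely generated subgroup H ≤ G, the intersection H ∩ Fix ψ is finitely generated. Then for every m ≥ 1, the group G × ℤ^m has the finitely generated fixed subgroup property of automorphisms. -/

import Mathlib

open commutatorElement

/-- The fixed subgroup of an endomorphism of a group. -/
def fixedSubgroup {G : Type*} [Group G] (φ : G →* G) : Subgroup G where
  carrier := {g | φ g = g}
  one_mem' := map_one φ
  mul_mem' := by
    intro a b ha hb
    simp only [Set.mem_setOf_eq, map_mul] at *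
    rw [ha, hb]
  inv_mem' := by
    intro a ha
    simp only [Set.mem_setOf_eq, map_inv] at *
    rw [ha]


/-- A group is FG if a hom out of it has FG kernel and FG range. -/
lemma fg_of_ker_of_range {P Q : Type*} [Group P] [Group Q] (ψ : P →* Q)
    (hk : ψ.ker.FG) (hr : ψ.range.FG) : Group.FG P := by
  obtain ⟨s, hs⟩ := hk
  obtain ⟨t, ht⟩ := hr
  choose u hu using fun x : {x // x ∈ t} => by
    have : (x : Q) ∈ ψ.range := ht ▸ Subgroup.subset_closure x.2
    exact this
  rw [Group.fg_iff]
  refine ⟨↑s ∪ Set.range u, ?_, (s.finite_toSet.union (Set.finite_range u))⟩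
  set H := Subgroup.closure (↑s ∪ Set.range u) with hH
  have hker : ψ.ker ≤ H := by
    rw [← hs]; exact Subgroup.closure_mono Set.subset_union_left
  have hrange : ψ.range ≤ H.map ψ := by
    rw [← ht, Subgroup.closure_le]
    intro x hx
    exact ⟨u ⟨x, hx⟩, Subgroup.subset_closure (Or.inr ⟨⟨x, hx⟩, rfl⟩), hu ⟨x, hx⟩⟩
  rw [eq_top_iff]
  intro p _
  obtain ⟨h, hhH, hh⟩ := hrange ⟨p, rfl⟩
  have : h⁻¹ * p ∈ ψ.ker := by
    simp [MonoidHom.mem_ker, map_mul, hh]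
  have := mul_mem hhH (hker this)
  simpa using this

/-- Any subgroup of a finitely generated commutative group is finitely generated. -/
lemma subgroup_fg_of_comm {Q : Type*} [CommGroup Q] (h : Group.FG Q) (H : Subgroup Q) :
    H.FG := by
  haveI := h
  haveI : AddGroup.FG (Additive Q) := AddGroup.fg_of_group_fg
  haveI : Module.Finite ℤ (Additive Q) := Module.Finite.iff_addGroup_fg.mpr inferInstance
  haveI : IsNoetherian ℤ (Additive Q) := isNoetherian_of_isNoetherianRing_of_finite ℤ _
  rw [Subgroup.fg_iff_add_fg]
  rw [← AddSubgroup.toIntSubmodule_toAddSubgroup H.toAddSubgroup,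
    ← Submodule.fg_iff_addSubgroup_fg]
  exact IsNoetherian.noetherian _


lemma subgroup_fg_of_comm' {Q : Type*} [Group Q] (hc : ∀ a b : Q, a * b = b * a)
    (h : Group.FG Q) (H : Subgroup Q) : H.FG := by
  letI : CommGroup Q := { (inferInstance : Group Q) with mul_comm := hc }
  exact subgroup_fg_of_comm h H

lemma fg_transfer {P Q : Type*} [Group P] [Group Q] (e : P ≃* Q) (h : Group.FG P) :
    Group.FG Q := by
  haveI := h
  exact Group.fg_of_surjective (f := e.toMonoidHom) e.surjective

lemma fg_sandwich {G : Type*} [Group G] {N S T : Subgroup G} (hNS : N ≤ S) (hST : S ≤ T)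
    (hT : T.FG) (hN : N.FG)
    (hcomm : ∀ x ∈ T, ∀ y ∈ T, ⁅x, y⁆ ∈ N) : S.FG := by
  haveI : Group.FG ↥T := (Group.fg_iff_subgroup_fg T).mpr hT
  have hNT : N ≤ T := hNS.trans hST
  set N' : Subgroup ↥T := N.subgroupOf T with hN'
  haveI : N'.Normal := by
    constructor
    intro n hn g
    rw [Subgroup.mem_subgroupOf] at hn ⊢
    have hc : ⁅(g : G), (n : G)⁆ ∈ N := hcomm g g.2 n n.2
    have : ((g * n * g⁻¹ : ↥T) : G) = ⁅(g : G), (n : G)⁆ * (n : G) := by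
      push_cast
      group
    rw [this]
    exact mul_mem hc hn
  set Q := ↥T ⧸ N' with hQ
  haveI : Group.FG Q := Group.fg_of_surjective (QuotientGroup.mk'_surjective N')
  have hQcomm : ∀ a b : Q, a * b = b * a := by
    intro a b
    induction a using QuotientGroup.induction_on with
    | H a =>
    induction b using QuotientGroup.induction_on with
    | H b =>
    rw [← QuotientGroup.mk_mul, ← QuotientGroup.mk_mul, QuotientGroup.eq]
    rw [Subgroup.mem_subgroupOf]
    have : (((a * b)⁻¹ * (b * a) : ↥T) : G) = ⁅(a : G)⁻¹, (b : G)⁻¹⁆⁻¹ := by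
      push_cast
      group
    rw [this]
    exact inv_mem (hcomm _ (inv_mem a.2) _ (inv_mem b.2))
  -- the map from S to Q
  set ψ : ↥S →* Q := (QuotientGroup.mk' N').comp (Subgroup.inclusion hST) with hψ
  have hker : ψ.ker = N.subgroupOf S := by
    ext x
    rw [MonoidHom.mem_ker, Subgroup.mem_subgroupOf]
    show (QuotientGroup.mk (Subgroup.inclusion hST x) : Q) = 1 ↔ _
    rw [QuotientGroup.eq_one_iff, Subgroup.mem_subgroupOf, Subgroup.coe_inclusion]
  have hkfg : ψ.ker.FG := by
    rw [hker]
    rw [← Group.fg_iff_subgroup_fg]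
    exact fg_transfer (Subgroup.subgroupOfEquivOfLe hNS).symm
      ((Group.fg_iff_subgroup_fg N).mpr hN)
  have hrfg : ψ.range.FG := subgroup_fg_of_comm' hQcomm inferInstance _
  rw [← Group.fg_iff_subgroup_fg]
  exact fg_of_ker_of_range ψ hkfg hrfg

/-- Let `G` be a centerless group with FGFP_a, finitely generated derived subgroup,
and such that `H ∩ Fix ψ` is finitely generated for every automorphism `ψ` of `G` and
every finitely generated subgroup `H ≤ G`.  Then `G × ℤᵐ` has FGFP_a for all `m ≥ 1`. -/
theorem fgfp_prod_int_pow_of_inert {G : Type*} [Group G]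
    (hc : Subgroup.center G = ⊥)
    (hfgfp : ∀ ψ : G ≃* G, (fixedSubgroup ψ.toMonoidHom).FG)
    (hcomm : (commutator G).FG)
    (hinert : ∀ (ψ : G ≃* G) (H : Subgroup G), H.FG →
      (H ⊓ fixedSubgroup ψ.toMonoidHom).FG) :
    ∀ m : ℕ, 1 ≤ m →
      ∀ φ : (G × Multiplicative (Fin m → ℤ)) ≃* (G × Multiplicative (Fin m → ℤ)),
        (fixedSubgroup φ.toMonoidHom).FG := by
  intro m _ φ
  set A := Multiplicative (Fin m → ℤ) with hA
  -- every automorphism sends (1, a) into {1} × A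
  have key : ∀ (ψ : (G × A) ≃* (G × A)) (a : A), (ψ (1, a)).1 = 1 := by
    intro ψ a
    have hcen : ∀ x : G × A, x * ψ (1, a) = ψ (1, a) * x := by
      intro x
      have hx : x = ψ (ψ.symm x) := (ψ.apply_symm_apply x).symm
      rw [hx, ← map_mul, ← map_mul]
      congr 1
      ext
      · simp
      · exact congrFun (mul_comm (ψ.symm x).2 ((1, a) : G × A).2) _
    have h1 : (ψ (1, a)).1 ∈ Subgroup.center G := by
      rw [Subgroup.mem_center_iff]
      intro g
      simpa using congrArg Prod.fst (hcen (g, 1))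
    rw [hc, Subgroup.mem_bot] at h1
    exact h1
  -- components of φ
  set α : G →* G := (MonoidHom.fst G A).comp (φ.toMonoidHom.comp (MonoidHom.inl G A)) with hα
  set f : G →* A := (MonoidHom.snd G A).comp (φ.toMonoidHom.comp (MonoidHom.inl G A)) with hf
  set β : A →* A := (MonoidHom.snd G A).comp (φ.toMonoidHom.comp (MonoidHom.inr G A)) with hβ
  set α' : G →* G :=
    (MonoidHom.fst G A).comp (φ.symm.toMonoidHom.comp (MonoidHom.inl G A)) with hα'
  set f' : G →* A :=
    (MonoidHom.snd G A).comp (φ.symm.toMonoidHom.comp (MonoidHom.inl G A)) with hf'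
  set β' : A →* A :=
    (MonoidHom.snd G A).comp (φ.symm.toMonoidHom.comp (MonoidHom.inr G A)) with hβ'
  have hφ : ∀ (g : G) (a : A), φ (g, a) = (α g, f g * β a) := by
    intro g a
    have : (g, a) = ((g, 1) : G × A) * (1, a) := by simp
    rw [this, map_mul]
    have h1 : φ (g, 1) = (α g, f g) := rfl
    have h2 : φ (1, a) = (1, β a) := Prod.ext (key φ a) rfl
    rw [h1, h2]
    simp
  have hφ' : ∀ (g : G) (a : A), φ.symm (g, a) = (α' g, f' g * β' a) := by
    intro g a
    have : (g, a) = ((g, 1) : G × A) * (1, a) := by simp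
    rw [this, map_mul]
    have h1 : φ.symm (g, 1) = (α' g, f' g) := rfl
    have h2 : φ.symm (1, a) = (1, β' a) := Prod.ext (key φ.symm a) rfl
    rw [h1, h2]
    simp
  -- α is an automorphism
  have hαα' : ∀ g : G, α' (α g) = g := by
    intro g
    have : φ.symm (φ (g, 1)) = (g, 1) := φ.symm_apply_apply _
    rw [hφ g 1, map_one, mul_one, hφ' (α g) (f g)] at this
    exact congrArg Prod.fst this
  have hα'α : ∀ g : G, α (α' g) = g := by
    intro g
    have : φ (φ.symm (g, 1)) = (g, 1) := φ.apply_symm_apply _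
    rw [hφ' g 1, map_one, mul_one, hφ (α' g) (f' g)] at this
    exact congrArg Prod.fst this
  set αe : G ≃* G :=
    { toFun := α, invFun := α', left_inv := hαα', right_inv := hα'α,
      map_mul' := map_mul α } with hαe
  -- the "difference" homomorphism a ↦ a * (β a)⁻¹
  set δ : A →* A := MonoidHom.mk' (fun a => a * (β a)⁻¹) (by
    intro a b
    show a * b * (β (a * b))⁻¹ = a * (β a)⁻¹ * (b * (β b)⁻¹)
    rw [map_mul, mul_inv]
    exact mul_mul_mul_comm a b (β a)⁻¹ (β b)⁻¹) with hδ
  -- the fixed subgroup of αe and the relevant sandwich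
  set T : Subgroup G := fixedSubgroup αe.toMonoidHom with hT
  set N : Subgroup G := commutator G ⊓ T with hN
  set S : Subgroup G := T ⊓ δ.range.comap f with hS
  have hTfg : T.FG := hfgfp αe
  have hNfg : N.FG := hinert αe (commutator G) hcomm
  have hNS : N ≤ S := by
    rintro g ⟨hg1, hg2⟩
    refine ⟨hg2, ?_⟩
    have h1 : f g = 1 := Abelianization.commutator_subset_ker f hg1
    refine Subgroup.mem_comap.mpr ⟨1, ?_⟩
    show (1 : A) * (β 1)⁻¹ = f g
    rw [h1, map_one]
    simp
  have hST : S ≤ T := inf_le_left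
  have hTN : ∀ x ∈ T, ∀ y ∈ T, ⁅x, y⁆ ∈ N := by
    intro x hx y hy
    constructor
    · exact Subgroup.commutator_mem_commutator (Subgroup.mem_top x) (Subgroup.mem_top y)
    · have hx' : α x = x := hx
      have hy' : α y = y := hy
      show α ⁅x, y⁆ = ⁅x, y⁆
      simp only [commutatorElement_def, map_mul, map_inv, hx', hy']
  have hSfg : S.FG := fg_sandwich hNS hST hTfg hNfg hTN
  -- now analyze the fixed subgroup of φ
  set F : Subgroup (G × A) := fixedSubgroup φ.toMonoidHom with hF
  have hmemF : ∀ g a, (g, a) ∈ F ↔ α g = g ∧ f g * β a = a := by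
    intro g a
    show φ (g, a) = (g, a) ↔ _
    rw [hφ g a, Prod.ext_iff]
  set π : ↥F →* G := (MonoidHom.fst G A).comp F.subtype with hπ
  have hrange : π.range = S := by
    ext g
    constructor
    · rintro ⟨⟨⟨g', a⟩, hmem⟩, rfl⟩
      rw [hmemF] at hmem
      refine ⟨hmem.1, Subgroup.mem_comap.mpr ⟨a, ?_⟩⟩
      show a * (β a)⁻¹ = f g'
      exact mul_inv_eq_iff_eq_mul.mpr hmem.2.symm
    · rintro ⟨hg1, hg2⟩
      obtain ⟨a, ha⟩ := Subgroup.mem_comap.mp hg2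
      have haa : a * (β a)⁻¹ = f g := ha
      have : (g, a) ∈ F := by
        rw [hmemF]
        refine ⟨hg1, ?_⟩
        rw [← haa]
        exact inv_mul_cancel_right a (β a)
      exact ⟨⟨(g, a), this⟩, rfl⟩
  have hker : π.ker.FG := by
    -- the kernel embeds into A
    set χ : ↥π.ker →* A := ((MonoidHom.snd G A).comp F.subtype).comp π.ker.subtype with hχ
    have hinj : Function.Injective χ := by
      intro x y hxy
      have hx1 : (((x : ↥F) : G × A)).1 = 1 := x.2
      have hy1 : (((y : ↥F) : G × A)).1 = 1 := y.2
      have hval : ((x : ↥F) : G × A) = ((y : ↥F) : G × A) :=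
        Prod.ext (hx1.trans hy1.symm) hxy
      exact Subtype.ext (Subtype.ext hval)
    have hcommA : ∀ a b : A, a * b = b * a := fun a b => mul_comm a b
    haveI : AddGroup.FG (Fin m → ℤ) :=
      Module.Finite.iff_addGroup_fg.mp inferInstance
    haveI hAfg : Group.FG A := Group.fg_of_mul_group_fg
    have hrfg : χ.range.FG := subgroup_fg_of_comm' hcommA hAfg χ.range
    have : Group.FG ↥π.ker :=
      fg_transfer (MonoidHom.ofInjective hinj).symm
        ((Group.fg_iff_subgroup_fg χ.range).mpr hrfg)
    exact (Group.fg_iff_subgroup_fg π.ker).mp this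
  have : Group.FG ↥F := fg_of_ker_of_range π hker (hrange ▸ hSfg)
  exact (Group.fg_iff_subgroup_fg F).mp this
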